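/- Let m ≥ 0 with (m+2)γ > 1. Then for all t ≥ 1, ∫ₜ^∞ s^{-γ} Q_m(s) ds ≤ P_m(t), where Q_m(t) = ∫₁^∞ s^{-γ}(max(t,s))^{-1} h(s)^m ds and P_m(t) = ∫₁^∞ s^{-γ} h(max(t,s)) h(s)^m ds. -/

import Mathlib

open MeasureTheory Real

noncomputable def h0 (γ t : ℝ) : ℝ := ∫ s in (1:ℝ)..t, s ^ (-γ)

noncomputable def hfun (γ t : ℝ) : ℝ := ∫ s in Set.Ioi (1:ℝ), s ^ (-γ) * (max t s)⁻¹

noncomputable def Nfun (γ : ℝ) (m : ℕ) (t : ℝ) : ℝ := ∫ s in (1:ℝ)..t, s ^ (-γ) * (hfun γ s) ^ m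

noncomputable def Qfun (γ : ℝ) (m : ℕ) (t : ℝ) : ℝ :=
  ∫ s in Set.Ioi (1:ℝ), s ^ (-γ) * (max t s)⁻¹ * (hfun γ s) ^ m

noncomputable def Pfun (γ : ℝ) (m : ℕ) (t : ℝ) : ℝ :=
  ∫ s in Set.Ioi (1:ℝ), s ^ (-γ) * hfun γ (max t s) * (hfun γ s) ^ m

noncomputable def Rfun (γ : ℝ) (m : ℕ) (t : ℝ) : ℝ :=
  ∫ s in Set.Ioi t, s ^ (-2 : ℝ) * Pfun γ m s

section Aux

open Set ENNReal

variable {γ δ : ℝ} {m : ℕ}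

/-- Integrability of the basic integrand of `hfun`. -/
lemma aux_int1 (hγ : 0 < γ) (x : ℝ) :
    IntegrableOn (fun u : ℝ => u ^ (-γ) * (max x u)⁻¹) (Set.Ioi 1) := by
  have hint : IntegrableOn (fun u : ℝ => u ^ (-γ - 1)) (Set.Ioi (1:ℝ)) :=
    integrableOn_Ioi_rpow_of_lt (by linarith) one_pos
  refine hint.mono' (by fun_prop : Measurable
      (fun u : ℝ => u ^ (-γ) * (max x u)⁻¹)).aestronglyMeasurable ?_
  filter_upwards [ae_restrict_mem measurableSet_Ioi] with u hu
  have hu0 : (0:ℝ) < u := lt_trans one_pos hu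
  have hmx : (0:ℝ) < max x u := lt_of_lt_of_le hu0 (le_max_right x u)
  have h2 : 0 ≤ u ^ (-γ) := rpow_nonneg hu0.le _
  rw [Real.norm_eq_abs, abs_of_nonneg (mul_nonneg h2 (inv_nonneg.2 hmx.le))]
  calc u ^ (-γ) * (max x u)⁻¹ ≤ u ^ (-γ) * u⁻¹ := by
        exact mul_le_mul_of_nonneg_left
          (inv_anti₀ hu0 (le_max_right x u)) h2
    _ = u ^ (-γ - 1) := by
        rw [show -γ - 1 = -γ + (-1) by ring, Real.rpow_add hu0, Real.rpow_neg_one]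

lemma hfun_nonneg (x : ℝ) : 0 ≤ hfun γ x := by
  refine setIntegral_nonneg measurableSet_Ioi fun u hu => ?_
  have hu0 : (0:ℝ) < u := lt_trans one_pos hu
  exact mul_nonneg (rpow_nonneg hu0.le _)
    (inv_nonneg.2 (le_trans hu0.le (le_max_right x u)))

lemma hfun_anti (hγ : 0 < γ) : Antitone (hfun γ) := by
  intro a b hab
  refine setIntegral_mono_on (aux_int1 hγ b) (aux_int1 hγ a) measurableSet_Ioi ?_
  intro u hu
  have hu0 : (0:ℝ) < u := lt_trans one_pos hu
  exact mul_le_mul_of_nonneg_left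
    (inv_anti₀ (lt_of_lt_of_le hu0 (le_max_right a u)) (max_le_max hab le_rfl))
    (rpow_nonneg hu0.le _)

lemma hfun_meas (hγ : 0 < γ) : Measurable (hfun γ) := (hfun_anti hγ).measurable

lemma max_inv_le_rpow (hδ0 : 0 ≤ δ) (hδ1 : δ ≤ 1) {u s : ℝ} (hu : 0 < u) (hs : 0 < s) :
    (max u s)⁻¹ ≤ u ^ (-δ) * s ^ (δ - 1) := by
  rcases le_total s u with h | h
  · rw [max_eq_left h]
    have h1 : u⁻¹ = u ^ (-δ) * u ^ (δ - 1) := by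
      rw [← Real.rpow_add hu, show -δ + (δ - 1) = -1 by ring, Real.rpow_neg_one]
    rw [h1]
    exact mul_le_mul_of_nonneg_left
      (rpow_le_rpow_of_nonpos hs h (by linarith)) (rpow_nonneg hu.le _)
  · rw [max_eq_right h]
    have h1 : s⁻¹ = s ^ (-δ) * s ^ (δ - 1) := by
      rw [← Real.rpow_add hs, show -δ + (δ - 1) = -1 by ring, Real.rpow_neg_one]
    rw [h1]
    exact mul_le_mul_of_nonneg_right
      (rpow_le_rpow_of_nonpos hu h (by linarith)) (rpow_nonneg hs.le _)

lemma hfun_le (hγ : 0 < γ) (hδ0 : 0 < δ) (hδγ : δ < γ) (hδ1 : δ ≤ 1) {u : ℝ} (hu : 0 < u) :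
    hfun γ u ≤ (γ - δ)⁻¹ * u ^ (-δ) := by
  have ha : δ - 1 - γ < -1 := by linarith
  have hint2 : IntegrableOn (fun s : ℝ => u ^ (-δ) * s ^ (δ - 1 - γ)) (Ioi (1:ℝ)) :=
    (integrableOn_Ioi_rpow_of_lt ha one_pos).const_mul _
  have hle : hfun γ u ≤ ∫ s in Ioi (1:ℝ), u ^ (-δ) * s ^ (δ - 1 - γ) := by
    refine setIntegral_mono_on (aux_int1 hγ u) hint2 measurableSet_Ioi fun s hs => ?_
    have hs0 : (0:ℝ) < s := lt_trans one_pos hs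
    calc s ^ (-γ) * (max u s)⁻¹ ≤ s ^ (-γ) * (u ^ (-δ) * s ^ (δ - 1)) :=
          mul_le_mul_of_nonneg_left (max_inv_le_rpow hδ0.le hδ1 hu hs0) (rpow_nonneg hs0.le _)
      _ = u ^ (-δ) * s ^ (δ - 1 - γ) := by
          rw [show δ - 1 - γ = -γ + (δ - 1) by ring, Real.rpow_add hs0]; ring
  refine hle.trans ?_
  rw [integral_const_mul, integral_Ioi_rpow_of_lt ha one_pos, Real.one_rpow]
  have heq : -1 / (δ - 1 - γ + 1) = (γ - δ)⁻¹ := by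
    rw [show δ - 1 - γ + 1 = -(γ - δ) by ring, div_neg, neg_div, neg_neg, one_div]
  rw [heq, mul_comm]

lemma hfun_le_const (hγ : 0 < γ) (hδ0 : 0 < δ) (hδγ : δ < γ) (hδ1 : δ ≤ 1) {u : ℝ}
    (hu : 1 ≤ u) : hfun γ u ≤ (γ - δ)⁻¹ := by
  refine (hfun_le hγ hδ0 hδγ hδ1 (lt_of_lt_of_le one_pos hu)).trans ?_
  have h1 : u ^ (-δ) ≤ 1 := Real.rpow_le_one_of_one_le_of_nonpos hu (by linarith)
  have h2 : (0:ℝ) ≤ (γ - δ)⁻¹ := inv_nonneg.2 (by linarith)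
  calc (γ - δ)⁻¹ * u ^ (-δ) ≤ (γ - δ)⁻¹ * 1 := mul_le_mul_of_nonneg_left h1 h2
    _ = (γ - δ)⁻¹ := mul_one _

/-- Integrability of the `Qfun` integrand. -/
lemma aux_intQ (hγ : 0 < γ) (hδ0 : 0 < δ) (hδγ : δ < γ) (hδ1 : δ ≤ 1) (x : ℝ) :
    IntegrableOn (fun u : ℝ => u ^ (-γ) * (max x u)⁻¹ * hfun γ u ^ m) (Set.Ioi 1) := by
  have hint : IntegrableOn (fun u : ℝ => ((γ - δ)⁻¹) ^ m * u ^ (-γ - 1)) (Set.Ioi (1:ℝ)) :=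
    (integrableOn_Ioi_rpow_of_lt (by linarith) one_pos).const_mul _
  have hmeas : Measurable (fun u : ℝ => u ^ (-γ) * (max x u)⁻¹ * hfun γ u ^ m) :=
    (by fun_prop : Measurable (fun u : ℝ => u ^ (-γ) * (max x u)⁻¹)).mul
      ((hfun_meas hγ).pow_const m)
  refine hint.mono' hmeas.aestronglyMeasurable ?_
  filter_upwards [ae_restrict_mem measurableSet_Ioi] with u hu
  have hu0 : (0:ℝ) < u := lt_trans one_pos hu
  have hmx : (0:ℝ) < max x u := lt_of_lt_of_le hu0 (le_max_right x u)
  have h2 : 0 ≤ u ^ (-γ) := rpow_nonneg hu0.le _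
  have hnn : 0 ≤ u ^ (-γ) * (max x u)⁻¹ * hfun γ u ^ m :=
    mul_nonneg (mul_nonneg h2 (inv_nonneg.2 hmx.le)) (pow_nonneg (hfun_nonneg _) m)
  rw [Real.norm_eq_abs, abs_of_nonneg hnn]
  have hh : hfun γ u ^ m ≤ ((γ - δ)⁻¹) ^ m :=
    pow_le_pow_left₀ (hfun_nonneg _) (hfun_le_const hγ hδ0 hδγ hδ1 hu.le) m
  calc u ^ (-γ) * (max x u)⁻¹ * hfun γ u ^ m
      ≤ u ^ (-γ) * u⁻¹ * ((γ - δ)⁻¹) ^ m := by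
        refine mul_le_mul ?_ hh (pow_nonneg (hfun_nonneg _) m)
          (mul_nonneg h2 (inv_nonneg.2 hu0.le))
        exact mul_le_mul_of_nonneg_left (inv_anti₀ hu0 (le_max_right x u)) h2
    _ = ((γ - δ)⁻¹) ^ m * u ^ (-γ - 1) := by
        rw [show -γ - 1 = -γ + (-1) by ring, Real.rpow_add hu0, Real.rpow_neg_one]; ring

/-- Integrability of the `Pfun` integrand. -/
lemma aux_intP (hγ : 0 < γ) (hδ0 : 0 < δ) (hδγ : δ < γ) (hδ1 : δ ≤ 1)
    (hexp : 1 < γ + ((m:ℝ) + 1) * δ) (t : ℝ) :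
    IntegrableOn (fun u : ℝ => u ^ (-γ) * hfun γ (max t u) * hfun γ u ^ m) (Set.Ioi 1) := by
  have ha : -(γ + ((m:ℝ) + 1) * δ) < -1 := by linarith
  have hint : IntegrableOn
      (fun u : ℝ => ((γ - δ)⁻¹) ^ (m + 1) * u ^ (-(γ + ((m:ℝ) + 1) * δ))) (Set.Ioi (1:ℝ)) :=
    (integrableOn_Ioi_rpow_of_lt ha one_pos).const_mul _
  have hmeas : Measurable (fun u : ℝ => u ^ (-γ) * hfun γ (max t u) * hfun γ u ^ m) := by
    refine Measurable.mul (Measurable.mul ?_ ?_) ((hfun_meas hγ).pow_const m)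
    · fun_prop
    · exact (hfun_meas hγ).comp (measurable_const.max measurable_id)
  refine hint.mono' hmeas.aestronglyMeasurable ?_
  filter_upwards [ae_restrict_mem measurableSet_Ioi] with u hu
  have hu0 : (0:ℝ) < u := lt_trans one_pos hu
  have hmx0 : (0:ℝ) < max t u := lt_of_lt_of_le hu0 (le_max_right t u)
  have h2 : 0 ≤ u ^ (-γ) := rpow_nonneg hu0.le _
  have hnn : 0 ≤ u ^ (-γ) * hfun γ (max t u) * hfun γ u ^ m :=
    mul_nonneg (mul_nonneg h2 (hfun_nonneg _)) (pow_nonneg (hfun_nonneg _) m)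
  rw [Real.norm_eq_abs, abs_of_nonneg hnn]
  have hC : (0:ℝ) ≤ (γ - δ)⁻¹ := inv_nonneg.2 (by linarith)
  have hb1 : hfun γ (max t u) ≤ (γ - δ)⁻¹ * u ^ (-δ) := by
    refine (hfun_le hγ hδ0 hδγ hδ1 hmx0).trans ?_
    exact mul_le_mul_of_nonneg_left
      (rpow_le_rpow_of_nonpos hu0 (le_max_right t u) (by linarith)) hC
  have hb2 : hfun γ u ^ m ≤ ((γ - δ)⁻¹ * u ^ (-δ)) ^ m :=
    pow_le_pow_left₀ (hfun_nonneg _) (hfun_le hγ hδ0 hδγ hδ1 hu0) m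
  calc u ^ (-γ) * hfun γ (max t u) * hfun γ u ^ m
      ≤ u ^ (-γ) * ((γ - δ)⁻¹ * u ^ (-δ)) * ((γ - δ)⁻¹ * u ^ (-δ)) ^ m := by
        refine mul_le_mul ?_ hb2 (pow_nonneg (hfun_nonneg _) m)
          (mul_nonneg h2 (mul_nonneg hC (rpow_nonneg hu0.le _)))
        exact mul_le_mul_of_nonneg_left hb1 h2
    _ = ((γ - δ)⁻¹) ^ (m + 1) * u ^ (-(γ + ((m:ℝ) + 1) * δ)) := by
        rw [mul_pow, ← Real.rpow_natCast (u ^ (-δ)) m, ← Real.rpow_mul hu0.le,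
          show -(γ + ((m:ℝ) + 1) * δ) = -γ + (-δ + -δ * m) by ring,
          Real.rpow_add hu0, Real.rpow_add hu0]
        ring

lemma Qfun_nonneg (x : ℝ) : 0 ≤ Qfun γ m x := by
  refine setIntegral_nonneg measurableSet_Ioi fun u hu => ?_
  have hu0 : (0:ℝ) < u := lt_trans one_pos hu
  exact mul_nonneg (mul_nonneg (rpow_nonneg hu0.le _)
    (inv_nonneg.2 (le_trans hu0.le (le_max_right x u)))) (pow_nonneg (hfun_nonneg _) m)

lemma Pfun_nonneg (x : ℝ) : 0 ≤ Pfun γ m x := by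
  refine setIntegral_nonneg measurableSet_Ioi fun u hu => ?_
  have hu0 : (0:ℝ) < u := lt_trans one_pos hu
  exact mul_nonneg (mul_nonneg (rpow_nonneg hu0.le _) (hfun_nonneg _))
    (pow_nonneg (hfun_nonneg _) m)

lemma Qfun_anti (hγ : 0 < γ) (hδ0 : 0 < δ) (hδγ : δ < γ) (hδ1 : δ ≤ 1) :
    Antitone (Qfun γ m) := by
  intro a b hab
  refine setIntegral_mono_on (aux_intQ hγ hδ0 hδγ hδ1 b) (aux_intQ hγ hδ0 hδγ hδ1 a)
    measurableSet_Ioi fun u hu => ?_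
  have hu0 : (0:ℝ) < u := lt_trans one_pos hu
  refine mul_le_mul_of_nonneg_right ?_ (pow_nonneg (hfun_nonneg _) m)
  exact mul_le_mul_of_nonneg_left
    (inv_anti₀ (lt_of_lt_of_le hu0 (le_max_right a u)) (max_le_max hab le_rfl))
    (rpow_nonneg hu0.le _)

end Aux

theorem stmt_15 (γ t : ℝ) (hγ : 0 < γ) (hγ1 : γ ≤ 1) (ht : 1 ≤ t) (m : ℕ)
    (hm : 1 < ((m : ℝ) + 2) * γ) :
    (∫ s in Set.Ioi t, s ^ (-γ) * Qfun γ m s) ≤ Pfun γ m t := by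
  classical
  set δ : ℝ := ((m:ℝ) + 2)⁻¹ with hδdef
  have hm2 : (0:ℝ) < (m:ℝ) + 2 := by positivity
  have hmδ : ((m:ℝ) + 2) * δ = 1 := mul_inv_cancel₀ (ne_of_gt hm2)
  have hδ0 : 0 < δ := by positivity
  have hδγ : δ < γ := by nlinarith
  have hδ1 : δ ≤ 1 := by nlinarith [Nat.cast_nonneg (α := ℝ) m]
  have hexp : 1 < γ + ((m:ℝ) + 1) * δ := by nlinarith
  -- notation for the inner integrand
  set F : ℝ → ℝ → ENNReal := fun s u =>
    ENNReal.ofReal (s ^ (-γ)) *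
      ENNReal.ofReal (u ^ (-γ) * (max s u)⁻¹ * hfun γ u ^ m) with hFdef
  have hFm : Measurable (Function.uncurry F) := by
    refine Measurable.mul (f := fun p : ℝ × ℝ => ENNReal.ofReal (p.1 ^ (-γ)))
      (g := fun p : ℝ × ℝ => ENNReal.ofReal (p.2 ^ (-γ) * (max p.1 p.2)⁻¹ * hfun γ p.2 ^ m)) ?_ ?_
    · exact (measurable_fst.pow_const _).ennreal_ofReal
    · refine Measurable.ennreal_ofReal ?_
      refine Measurable.mul ?_ (((hfun_meas hγ).comp measurable_snd).pow_const m)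
      fun_prop
  -- nonnegativity and measurability of the LHS integrand
  have hmeas1 : AEStronglyMeasurable (fun s => s ^ (-γ) * Qfun γ m s)
      (volume.restrict (Set.Ioi t)) :=
    ((measurable_id.pow_const _).mul
      (Qfun_anti hγ hδ0 hδγ hδ1).measurable).aestronglyMeasurable
  have hnn1 : 0 ≤ᵐ[volume.restrict (Set.Ioi t)] fun s => s ^ (-γ) * Qfun γ m s := by
    filter_upwards [ae_restrict_mem measurableSet_Ioi] with s hs
    have hs0 : (0:ℝ) < s := lt_of_lt_of_le one_pos (le_trans ht hs.le)
    exact mul_nonneg (rpow_nonneg hs0.le _) (Qfun_nonneg s)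
  rw [integral_eq_lintegral_of_nonneg_ae hnn1 hmeas1]
  refine ENNReal.toReal_le_of_le_ofReal (Pfun_nonneg t) ?_
  -- Step 1: bound by double lintegral
  have key1 : (∫⁻ s in Set.Ioi t, ENNReal.ofReal (s ^ (-γ) * Qfun γ m s))
      ≤ ∫⁻ s in Set.Ioi t, ∫⁻ u in Set.Ioi (1:ℝ), F s u := by
    refine lintegral_mono_ae ?_
    filter_upwards [ae_restrict_mem measurableSet_Ioi] with s hs
    have hs0 : (0:ℝ) < s := lt_of_lt_of_le one_pos (le_trans ht hs.le)
    have hQint := aux_intQ (m := m) hγ hδ0 hδγ hδ1 s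
    have hQnn : 0 ≤ᵐ[volume.restrict (Set.Ioi (1:ℝ))]
        fun u => u ^ (-γ) * (max s u)⁻¹ * hfun γ u ^ m := by
      filter_upwards [ae_restrict_mem measurableSet_Ioi] with u hu
      have hu0 : (0:ℝ) < u := lt_trans one_pos hu
      exact mul_nonneg (mul_nonneg (rpow_nonneg hu0.le _)
        (inv_nonneg.2 (le_trans hu0.le (le_max_right s u)))) (pow_nonneg (hfun_nonneg _) m)
    rw [ENNReal.ofReal_mul (rpow_nonneg hs0.le _)]
    rw [show Qfun γ m s = ∫ u in Set.Ioi (1:ℝ), u ^ (-γ) * (max s u)⁻¹ * hfun γ u ^ m from rfl]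
    rw [ofReal_integral_eq_lintegral_ofReal hQint hQnn]
    rw [← lintegral_const_mul'' _ (by
      refine Measurable.aemeasurable (Measurable.ennreal_ofReal ?_)
      exact (by fun_prop : Measurable (fun u : ℝ => u ^ (-γ) * (max s u)⁻¹)).mul
        ((hfun_meas hγ).pow_const m))]
  refine key1.trans ?_
  -- Step 2: swap
  rw [lintegral_lintegral_swap hFm.aemeasurable]
  -- Step 3: per-u bound
  have key3 : ∀ u ∈ Set.Ioi (1:ℝ), (∫⁻ s in Set.Ioi t, F s u)
      ≤ ENNReal.ofReal (u ^ (-γ) * hfun γ (max t u) * hfun γ u ^ m) := by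
    intro u hu
    have hu0 : (0:ℝ) < u := lt_trans one_pos hu
    have hcnn : 0 ≤ u ^ (-γ) * hfun γ u ^ m :=
      mul_nonneg (rpow_nonneg hu0.le _) (pow_nonneg (hfun_nonneg _) m)
    have step_eq : (∫⁻ s in Set.Ioi t, F s u)
        = ENNReal.ofReal (u ^ (-γ) * hfun γ u ^ m) *
          ∫⁻ s in Set.Ioi t, ENNReal.ofReal (s ^ (-γ) * (max (max t u) s)⁻¹) := by
      rw [← lintegral_const_mul'' _ (by
        refine Measurable.aemeasurable (Measurable.ennreal_ofReal ?_); fun_prop)]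
      refine lintegral_congr_ae ?_
      filter_upwards [ae_restrict_mem measurableSet_Ioi] with s hs
      have hts : t ≤ s := hs.le
      have hs0 : (0:ℝ) < s := lt_of_lt_of_le one_pos (le_trans ht hts)
      have hmax : max (max t u) s = max s u := by
        rw [max_assoc, max_eq_right (le_trans hts (le_max_right u s))]; exact max_comm u s
      rw [hFdef]
      simp only []
      rw [← ENNReal.ofReal_mul (rpow_nonneg hs0.le _), ← ENNReal.ofReal_mul hcnn, hmax]
      congr 1
      ring
    rw [step_eq]
    have step2 : (∫⁻ s in Set.Ioi t, ENNReal.ofReal (s ^ (-γ) * (max (max t u) s)⁻¹))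
        ≤ ENNReal.ofReal (hfun γ (max t u)) := by
      refine le_trans (lintegral_mono_set (Set.Ioi_subset_Ioi ht)) ?_
      have hnn : 0 ≤ᵐ[volume.restrict (Set.Ioi (1:ℝ))]
          fun s => s ^ (-γ) * (max (max t u) s)⁻¹ := by
        filter_upwards [ae_restrict_mem measurableSet_Ioi] with s hs
        have hs0 : (0:ℝ) < s := lt_trans one_pos hs
        exact mul_nonneg (rpow_nonneg hs0.le _)
          (inv_nonneg.2 (le_trans hs0.le (le_max_right _ s)))
      rw [← ofReal_integral_eq_lintegral_ofReal (aux_int1 hγ (max t u)) hnn]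
      exact le_refl _
    calc ENNReal.ofReal (u ^ (-γ) * hfun γ u ^ m) *
          ∫⁻ s in Set.Ioi t, ENNReal.ofReal (s ^ (-γ) * (max (max t u) s)⁻¹)
        ≤ ENNReal.ofReal (u ^ (-γ) * hfun γ u ^ m) * ENNReal.ofReal (hfun γ (max t u)) :=
          mul_le_mul_right step2 _
      _ = ENNReal.ofReal (u ^ (-γ) * hfun γ (max t u) * hfun γ u ^ m) := by
          rw [← ENNReal.ofReal_mul hcnn]
          congr 1
          ring
  -- Step 4: conclude
  have key4 : (∫⁻ u in Set.Ioi (1:ℝ), ∫⁻ s in Set.Ioi t, F s u)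
      ≤ ∫⁻ u in Set.Ioi (1:ℝ),
          ENNReal.ofReal (u ^ (-γ) * hfun γ (max t u) * hfun γ u ^ m) := by
    refine lintegral_mono_ae ?_
    filter_upwards [ae_restrict_mem measurableSet_Ioi] with u hu
    exact key3 u hu
  refine key4.trans ?_
  have hPnn : 0 ≤ᵐ[volume.restrict (Set.Ioi (1:ℝ))]
      fun u => u ^ (-γ) * hfun γ (max t u) * hfun γ u ^ m := by
    filter_upwards [ae_restrict_mem measurableSet_Ioi] with u hu
    have hu0 : (0:ℝ) < u := lt_trans one_pos hu
    exact mul_nonneg (mul_nonneg (rpow_nonneg hu0.le _) (hfun_nonneg _))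
      (pow_nonneg (hfun_nonneg _) m)
  rw [← ofReal_integral_eq_lintegral_ofReal (aux_intP hγ hδ0 hδγ hδ1 hexp t) hPnn]
  exact le_refl _
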